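/- Let R be a Noetherian reduced ring and R ⊆ S a finite birational extension (S contained in the total ring of fractions of R). If the inclusion R → S splits as a map of R-modules, then S = R. Consequently, every birational derived splinter is a normal ring. -/
import Mathlib

set_option synthInstance.maxHeartbeats 1000000

/-- Let `R` be a Noetherian reduced ring and `R ⊆ S` a finite birational extension,
i.e. `S` is an `R`-subalgebra of the total ring of fractions of `R` which is finite as an
`R`-module.  If the inclusion `R → S` splits as a map of `R`-modules, then `S = R`. -/
theorem stmt7 {R : Type*} [CommRing R] [IsNoetherianRing R] [IsReduced R]
    (S : Subalgebra R (FractionRing R)) (hfin : Module.Finite R S)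
    (φ : S →ₗ[R] R) (hφ : φ 1 = 1) :
    S = ⊥ := by
  refine le_antisymm ?_ bot_le
  intro s hs
  obtain ⟨⟨a, b⟩, hab⟩ := IsLocalization.surj (nonZeroDivisors R) s
  have hb : IsUnit (algebraMap R (FractionRing R) b) :=
    IsLocalization.map_units _ b
  have key : (b : R) • (⟨s, hs⟩ : S) = (a : R) • (1 : S) := by
    ext
    simpa [Algebra.smul_def, mul_comm] using hab
  have h1 := congrArg φ key
  rw [map_smul, map_smul, hφ, smul_eq_mul, smul_eq_mul, mul_one] at h1
  have h2 : algebraMap R (FractionRing R) b * algebraMap R (FractionRing R) (φ ⟨s, hs⟩)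
      = algebraMap R (FractionRing R) b * s := by
    rw [← map_mul, h1, ← hab, mul_comm]
  rw [Algebra.mem_bot]
  exact ⟨φ ⟨s, hs⟩, hb.mul_left_cancel h2⟩
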